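/- Let Ω ⊂ ℝ^d be a bounded Lipschitz domain and let z ∈ H¹₀(Ω), Θ a symmetric L² matrix field with div Θ ∈ L²(Ω;ℝ^d), and t ∈ (0,1]. Consider the mixed bilinear form B((z,Θ),(δz,δΘ)) := (C⁻¹Θ, δΘ) + t²(div Θ, div δΘ) − (∇z, div δΘ) − (div Θ, ∇δz), where C is a symmetric positive definite fourth-order tensor with bounds independent of t. If the inf-sup condition sup_Θ (div Θ, ∇δz)/(‖Θ‖² + t²‖div Θ‖²)^{1/2} ≥ β‖∇δz‖ holds with β independent of t, then for every right-hand side (g, H, ξ) ∈ L²(Ω) × L²_sym(Ω) × L²(Ω;ℝ^d) the problem B((z,Θ),(δz,δΘ)) = (g, δz) + (H, δΘ) + t^{1/2}(ξ, ∇δz) has a unique solution with ‖Θ‖² + t²‖div Θ‖² + ‖z‖² + t‖∇z‖² ≲ ‖g‖² + ‖H‖² + ‖ξ‖², uniformly in t ∈ (0,1]. -/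

import Mathlib

open Set

set_option maxHeartbeats 1000000

noncomputable def rmC1 (c₁ β M : ℝ) : ℝ :=
  (((M + 1) / β + 2) ^ 2 + 4 * min c₁ 1 / β) / (min c₁ 1) ^ 2
noncomputable def rmC2 (c₁ β M : ℝ) : ℝ :=
  (2 * (M + 1) ^ 2 * rmC1 c₁ β M + 8) / β ^ 2
noncomputable def rmK0 (c₁ β Cp M : ℝ) : ℝ :=
  rmC1 c₁ β M + (Cp ^ 2 + 1) * rmC2 c₁ β M

lemma rmC1_nonneg {c₁ β M : ℝ} (hc₁ : 0 < c₁) (hβ : 0 < β) : 0 ≤ rmC1 c₁ β M := by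
  have hm : 0 < min c₁ 1 := lt_min hc₁ one_pos
  unfold rmC1
  apply div_nonneg _ (sq_nonneg _)
  have : 0 ≤ 4 * min c₁ 1 / β := by positivity
  nlinarith [sq_nonneg ((M + 1) / β + 2)]

lemma rmC2_nonneg {c₁ β M : ℝ} (hc₁ : 0 < c₁) (hβ : 0 < β) (hM : 0 ≤ M) :
    0 ≤ rmC2 c₁ β M := by
  have h1 := rmC1_nonneg (M := M) hc₁ hβ
  unfold rmC2
  apply div_nonneg _ (sq_nonneg _)
  nlinarith [sq_nonneg (M + 1)]

lemma rmK0_nonneg {c₁ β Cp M : ℝ} (hc₁ : 0 < c₁) (hβ : 0 < β) (hM : 0 ≤ M) :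
    0 ≤ rmK0 c₁ β Cp M := by
  have h1 := rmC1_nonneg (M := M) hc₁ hβ
  have h2 := rmC2_nonneg (M := M) hc₁ hβ hM
  unfold rmK0
  nlinarith [sq_nonneg Cp]

lemma rm_quad1 {m c2 c3 u D : ℝ} (hm : 0 < m)
    (h : m * u ^ 2 ≤ c2 * D * u + c3 * D ^ 2) :
    u ^ 2 ≤ ((c2 ^ 2 + 2 * m * c3) / m ^ 2) * D ^ 2 := by
  rw [div_mul_eq_mul_div, le_div_iff₀ (by positivity : (0:ℝ) < m ^ 2)]
  have h2 : 2 * m * (m * u ^ 2) ≤ 2 * m * (c2 * D * u + c3 * D ^ 2) :=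
    mul_le_mul_of_nonneg_left h (by positivity)
  linarith only [h2, sq_nonneg (c2 * D - m * u)]

lemma rm_quad2 {β A w u D C1 : ℝ} (hβ : 0 < β) (hw : 0 ≤ w) (hA : 0 ≤ A)
    (h : β * w ≤ A * u + 2 * D) (hu2 : u ^ 2 ≤ C1 * D ^ 2) :
    w ^ 2 ≤ ((2 * A ^ 2 * C1 + 8) / β ^ 2) * D ^ 2 := by
  rw [div_mul_eq_mul_div, le_div_iff₀ (by positivity : (0:ℝ) < β ^ 2)]
  have h1 : (β * w) ^ 2 ≤ (A * u + 2 * D) ^ 2 :=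
    pow_le_pow_left₀ (by positivity) h 2
  have h3 : 2 * A ^ 2 * u ^ 2 ≤ 2 * A ^ 2 * (C1 * D ^ 2) :=
    mul_le_mul_of_nonneg_left hu2 (by positivity)
  linarith only [h1, h3, sq_nonneg (A * u - 2 * D)]

section core
variable {Z HD L2sc L2v L2s : Type*}
  [NormedAddCommGroup Z] [InnerProductSpace ℝ Z]
  [NormedAddCommGroup HD] [InnerProductSpace ℝ HD]
  [NormedAddCommGroup L2sc] [InnerProductSpace ℝ L2sc]
  [NormedAddCommGroup L2v] [InnerProductSpace ℝ L2v]
  [NormedAddCommGroup L2s] [InnerProductSpace ℝ L2s]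

lemma rm_core_est
    (embE : Z →L[ℝ] L2sc) (grad : Z →L[ℝ] L2v)
    (embS : HD →L[ℝ] L2s) (dvg : HD →L[ℝ] L2v)
    (hHDnorm : ∀ Θ : HD, ‖Θ‖ ^ 2 = ‖embS Θ‖ ^ 2 + ‖dvg Θ‖ ^ 2)
    (Cp : ℝ) (hPoincare : ∀ z : Z, ‖embE z‖ ≤ Cp * ‖grad z‖)
    (Cinv : L2s →L[ℝ] L2s) (c₁ : ℝ) (hc₁ : 0 < c₁)
    (hCpos : ∀ s : L2s, c₁ * ‖s‖ ^ 2 ≤ (inner ℝ (Cinv s) s : ℝ))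
    (β : ℝ) (hβ : 0 < β)
    (hinfsup : ∀ t ∈ Ioc (0:ℝ) 1, ∀ δz : Z,
      β * ‖grad δz‖ ≤ sSup {r : ℝ | ∃ Θ : HD, Θ ≠ 0 ∧
        r = (inner ℝ (dvg Θ) (grad δz) : ℝ) /
              Real.sqrt (‖embS Θ‖ ^ 2 + t ^ 2 * ‖dvg Θ‖ ^ 2)})
    (t : ℝ) (ht0 : 0 < t) (ht1 : t ≤ 1) (z : Z) (Θ : HD)
    (ℓ : Z → HD → ℝ) (P Q R : ℝ) (hP : 0 ≤ P) (hQ : 0 ≤ Q) (hR : 0 ≤ R)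
    (heq : ∀ (δz : Z) (δΘ : HD),
      (inner ℝ (Cinv (embS Θ)) (embS δΘ) : ℝ)
        + t ^ 2 * (inner ℝ (dvg Θ) (dvg δΘ) : ℝ)
        - (inner ℝ (grad z) (dvg δΘ) : ℝ) - (inner ℝ (dvg Θ) (grad δz) : ℝ)
      = ℓ δz δΘ)
    (hℓ : ∀ (δz : Z) (δΘ : HD),
      |ℓ δz δΘ| ≤ P * ‖grad δz‖ + Q * ‖embS δΘ‖ + R * (t * ‖dvg δΘ‖)) :
    ‖embS Θ‖ ^ 2 + t ^ 2 * ‖dvg Θ‖ ^ 2 + ‖embE z‖ ^ 2 + t * ‖grad z‖ ^ 2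
      ≤ rmK0 c₁ β Cp ‖Cinv‖ * (P ^ 2 + Q ^ 2 + R ^ 2) := by
  set M := ‖Cinv‖ with hMdef
  have hM0 : (0:ℝ) ≤ M := norm_nonneg _
  set a := ‖embS Θ‖ with hadef
  set w := ‖grad z‖ with hwdef
  have ha : 0 ≤ a := norm_nonneg _
  have hw : 0 ≤ w := norm_nonneg _
  have hb : 0 ≤ t * ‖dvg Θ‖ := by positivity
  set b := t * ‖dvg Θ‖ with hbdef
  set m := min c₁ 1 with hmdef
  have hm0 : 0 < m := lt_min hc₁ one_pos
  have hmc : m ≤ c₁ := min_le_left _ _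
  have hm1 : m ≤ 1 := min_le_right _ _
  set D := Real.sqrt (P ^ 2 + Q ^ 2 + R ^ 2) with hDdef
  have hD0 : 0 ≤ D := Real.sqrt_nonneg _
  have hD2 : D ^ 2 = P ^ 2 + Q ^ 2 + R ^ 2 := Real.sq_sqrt (by positivity)
  have hPD : P ≤ D := (Real.le_sqrt hP (by positivity)).mpr
    (by linarith only [sq_nonneg Q, sq_nonneg R])
  have hQD : Q ≤ D := (Real.le_sqrt hQ (by positivity)).mpr
    (by linarith only [sq_nonneg P, sq_nonneg R])
  have hRD : R ≤ D := (Real.le_sqrt hR (by positivity)).mpr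
    (by linarith only [sq_nonneg P, sq_nonneg Q])
  set u := Real.sqrt (a ^ 2 + b ^ 2) with hudef
  have hu0 : 0 ≤ u := Real.sqrt_nonneg _
  have hu2 : u ^ 2 = a ^ 2 + b ^ 2 := Real.sq_sqrt (by positivity)
  have hau : a ≤ u := (Real.le_sqrt ha (by positivity)).mpr
    (by linarith only [sq_nonneg b])
  have hbu : b ≤ u := (Real.le_sqrt hb (by positivity)).mpr
    (by linarith only [sq_nonneg a])
  -- Energy estimate
  have hb2 : b ^ 2 = t ^ 2 * ‖dvg Θ‖ ^ 2 := by rw [hbdef]; ring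
  have H1 : c₁ * a ^ 2 + b ^ 2 ≤ P * w + Q * a + R * b := by
    have e1 := heq (-z) Θ
    rw [map_neg, inner_neg_right, real_inner_self_eq_norm_sq,
      real_inner_comm (grad z) (dvg Θ)] at e1
    have hq := hCpos (embS Θ)
    have habs := hℓ (-z) Θ
    rw [map_neg, norm_neg] at habs
    have hle : ℓ (-z) Θ ≤ P * w + Q * a + R * b := le_trans (le_abs_self _) habs
    linarith only [e1, hq, hle, hb2]
  -- inf-sup estimate
  have H2 : β * w ≤ M * a + b + Q + R := by
    have hMa : 0 ≤ M * a := mul_nonneg hM0 ha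
    refine le_trans (hinfsup t ⟨ht0, ht1⟩ z) (Real.sSup_le ?_ (by linarith)) 
    rintro r ⟨Θ', hΘ', rfl⟩
    set d := Real.sqrt (‖embS Θ'‖ ^ 2 + t ^ 2 * ‖dvg Θ'‖ ^ 2) with hddef
    have hs' : 0 < ‖embS Θ'‖ ^ 2 + ‖dvg Θ'‖ ^ 2 := by
      rw [← hHDnorm]; exact pow_pos (norm_pos_iff.mpr hΘ') 2
    have hd0 : 0 < d := by
      apply Real.sqrt_pos.mpr
      linarith only [mul_pos (pow_pos ht0 2) hs',
        mul_nonneg (mul_nonneg (by linarith only [ht1] : (0:ℝ) ≤ 1 - t)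
          (by linarith only [ht0] : (0:ℝ) ≤ 1 + t)) (sq_nonneg ‖embS Θ'‖)]
    have hsd : ‖embS Θ'‖ ≤ d :=
      (Real.le_sqrt (norm_nonneg _) (by positivity)).mpr (le_add_of_nonneg_right (by positivity))
    have htd : t * ‖dvg Θ'‖ ≤ d :=
      (Real.le_sqrt (by positivity) (by positivity)).mpr
        (by linarith only [sq_nonneg ‖embS Θ'‖])
    have e2 := heq 0 Θ'
    rw [map_zero, inner_zero_right] at e2
    have n1 : |(inner ℝ (Cinv (embS Θ)) (embS Θ') : ℝ)| ≤ M * a * d := by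
      refine le_trans (abs_real_inner_le_norm _ _) ?_
      have h1 : ‖Cinv (embS Θ)‖ ≤ M * a := Cinv.le_opNorm _
      have h2 := mul_le_mul h1 hsd (norm_nonneg _) (by positivity)
      linarith only [h2]
    have n2 : |t ^ 2 * (inner ℝ (dvg Θ) (dvg Θ') : ℝ)| ≤ b * d := by
      rw [abs_mul, abs_of_nonneg (sq_nonneg t)]
      have h1 : |(inner ℝ (dvg Θ) (dvg Θ') : ℝ)| ≤ ‖dvg Θ‖ * ‖dvg Θ'‖ := abs_real_inner_le_norm _ _
      have h2 : t ^ 2 * |(inner ℝ (dvg Θ) (dvg Θ') : ℝ)| ≤ t ^ 2 * (‖dvg Θ‖ * ‖dvg Θ'‖) :=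
        mul_le_mul_of_nonneg_left h1 (sq_nonneg t)
      have h3 : t ^ 2 * (‖dvg Θ‖ * ‖dvg Θ'‖) = b * (t * ‖dvg Θ'‖) := by rw [hbdef]; ring
      rw [h3] at h2
      exact le_trans h2 (mul_le_mul_of_nonneg_left htd hb)
    have n3 : |ℓ 0 Θ'| ≤ Q * d + R * d := by
      refine le_trans (hℓ 0 Θ') ?_
      rw [map_zero, norm_zero]
      have g1 := mul_le_mul_of_nonneg_left hsd hQ
      have g2 := mul_le_mul_of_nonneg_left htd hR
      linarith only [g1, g2]
    have hnum : (inner ℝ (dvg Θ') (grad z) : ℝ) ≤ (M * a + b + Q + R) * d := by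
      rw [real_inner_comm]
      have k1 := (abs_le.mp n1).2
      have k2 := (abs_le.mp n2).2
      have k3 := (abs_le.mp n3).1
      linarith only [e2, k1, k2, k3]
    rw [div_le_iff₀ hd0]
    exact hnum
  -- algebra
  have hwle : β * w ≤ (M + 1) * u + 2 * D := by
    have h1 : M * a ≤ M * u := mul_le_mul_of_nonneg_left hau hM0
    linarith only [H2, h1, hbu, hQD, hRD]
  have H3 : m * u ^ 2 ≤ (((M + 1) / β + 2)) * D * u + (2 / β) * D ^ 2 := by
    have g1 : 0 ≤ (c₁ - m) * a ^ 2 := mul_nonneg (by linarith only [hmc]) (sq_nonneg a)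
    have g2 : 0 ≤ (1 - m) * b ^ 2 := mul_nonneg (by linarith only [hm1]) (sq_nonneg b)
    have hu2m : m * u ^ 2 = m * a ^ 2 + m * b ^ 2 := by rw [hu2]; ring
    have h1 : m * u ^ 2 ≤ c₁ * a ^ 2 + b ^ 2 := by linarith only [g1, g2, hu2m]
    have hwle' : w ≤ ((M + 1) * u + 2 * D) / β := by
      rw [le_div_iff₀ hβ]; linarith only [hwle]
    have h2 : P * w ≤ D * (((M + 1) * u + 2 * D) / β) := mul_le_mul hPD hwle' hw hD0
    have h5 : D * (((M + 1) * u + 2 * D) / β) = ((M + 1) / β) * D * u + (2 / β) * D ^ 2 := by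
      field_simp
    rw [h5] at h2
    have h3 : Q * a ≤ D * u := mul_le_mul hQD hau ha hD0
    have h4 : R * b ≤ D * u := mul_le_mul hRD hbu hb hD0
    linarith only [H1, h1, h2, h3, h4]
  have H4 : u ^ 2 ≤ rmC1 c₁ β M * D ^ 2 := by
    have h := rm_quad1 hm0 H3
    have hre : ((((M + 1) / β + 2)) ^ 2 + 2 * m * (2 / β)) / m ^ 2 = rmC1 c₁ β M := by
      rw [rmC1, ← hmdef]; ring
    rwa [hre] at h
  have H5 : w ^ 2 ≤ rmC2 c₁ β M * D ^ 2 := by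
    have h := rm_quad2 hβ hw (by linarith only [hM0] : (0:ℝ) ≤ M + 1) hwle H4
    have hre : (2 * (M + 1) ^ 2 * rmC1 c₁ β M + 8) / β ^ 2 = rmC2 c₁ β M := by rw [rmC2]
    rwa [hre] at h
  have hez2 : ‖embE z‖ ^ 2 ≤ Cp ^ 2 * w ^ 2 := by
    have h1 := pow_le_pow_left₀ (norm_nonneg (embE z)) (hPoincare z) 2
    linarith only [h1]
  have htw : t * w ^ 2 ≤ w ^ 2 := by
    linarith only [mul_nonneg (by linarith only [ht1] : (0:ℝ) ≤ 1 - t) (sq_nonneg w)]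
  have hCpH5 : Cp ^ 2 * w ^ 2 ≤ Cp ^ 2 * (rmC2 c₁ β M * D ^ 2) :=
    mul_le_mul_of_nonneg_left H5 (sq_nonneg Cp)
  rw [← hD2, rmK0]
  linarith only [H4, H5, hCpH5, hez2, htw, hu2, hb2]
end core

section op
variable {Z HD L2v L2s : Type*}
  [NormedAddCommGroup Z] [InnerProductSpace ℝ Z] [CompleteSpace Z]
  [NormedAddCommGroup HD] [InnerProductSpace ℝ HD] [CompleteSpace HD]
  [NormedAddCommGroup L2v] [InnerProductSpace ℝ L2v] [CompleteSpace L2v]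
  [NormedAddCommGroup L2s] [InnerProductSpace ℝ L2s] [CompleteSpace L2s]

noncomputable def rmA (grad : Z →L[ℝ] L2v) (embS : HD →L[ℝ] L2s) (dvg : HD →L[ℝ] L2v)
    (Cinv : L2s →L[ℝ] L2s) (t : ℝ) :
    WithLp 2 (Z × HD) →L[ℝ] WithLp 2 (Z × HD) :=
  letI e := WithLp.prodContinuousLinearEquiv 2 ℝ Z HD
  letI pfst : WithLp 2 (Z × HD) →L[ℝ] Z := (ContinuousLinearMap.fst ℝ Z HD).comp
    (e : WithLp 2 (Z × HD) →L[ℝ] Z × HD)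
  letI psnd : WithLp 2 (Z × HD) →L[ℝ] HD := (ContinuousLinearMap.snd ℝ Z HD).comp
    (e : WithLp 2 (Z × HD) →L[ℝ] Z × HD)
  ((e.symm : Z × HD →L[ℝ] WithLp 2 (Z × HD))).comp
    ((-(((ContinuousLinearMap.adjoint grad).comp dvg).comp psnd)).prod
      ((((ContinuousLinearMap.adjoint embS).comp (Cinv.comp embS)).comp psnd)
        + t ^ 2 • (((ContinuousLinearMap.adjoint dvg).comp dvg).comp psnd)
        - (((ContinuousLinearMap.adjoint dvg).comp grad).comp pfst)))

lemma rmA_inner (grad : Z →L[ℝ] L2v) (embS : HD →L[ℝ] L2s) (dvg : HD →L[ℝ] L2v)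
    (Cinv : L2s →L[ℝ] L2s) (t : ℝ) (x y : WithLp 2 (Z × HD)) :
    (inner ℝ (rmA grad embS dvg Cinv t x) y : ℝ)
      = (inner ℝ (Cinv (embS x.snd)) (embS y.snd) : ℝ)
        + t ^ 2 * (inner ℝ (dvg x.snd) (dvg y.snd) : ℝ)
        - (inner ℝ (grad x.fst) (dvg y.snd) : ℝ)
        - (inner ℝ (dvg x.snd) (grad y.fst) : ℝ) := by
  simp only [rmA, WithLp.prod_inner_apply, ContinuousLinearMap.comp_apply,
    ContinuousLinearEquiv.coe_coe, WithLp.prodContinuousLinearEquiv_apply,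
    WithLp.prodContinuousLinearEquiv_symm_apply, ContinuousLinearMap.prod_apply,
    WithLp.equiv_symm_apply, WithLp.toLp_fst, WithLp.toLp_snd, WithLp.ofLp_fst, WithLp.ofLp_snd,
    ContinuousLinearMap.neg_apply, ContinuousLinearMap.sub_apply,
    ContinuousLinearMap.add_apply, ContinuousLinearMap.smul_apply,
    ContinuousLinearMap.coe_fst', ContinuousLinearMap.coe_snd',
    inner_neg_left, inner_sub_left, inner_add_left, real_inner_smul_left,
    ContinuousLinearMap.adjoint_inner_left]
  ring
end op

section op2
variable {Z HD L2sc L2v L2s : Type*}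
  [NormedAddCommGroup Z] [InnerProductSpace ℝ Z] [CompleteSpace Z]
  [NormedAddCommGroup HD] [InnerProductSpace ℝ HD] [CompleteSpace HD]
  [NormedAddCommGroup L2sc] [InnerProductSpace ℝ L2sc] [CompleteSpace L2sc]
  [NormedAddCommGroup L2v] [InnerProductSpace ℝ L2v] [CompleteSpace L2v]
  [NormedAddCommGroup L2s] [InnerProductSpace ℝ L2s] [CompleteSpace L2s]

lemma rmA_symm (grad : Z →L[ℝ] L2v) (embS : HD →L[ℝ] L2s) (dvg : HD →L[ℝ] L2v)
    (Cinv : L2s →L[ℝ] L2s) (t : ℝ)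
    (hCsym : ∀ s s' : L2s, (inner ℝ (Cinv s) s' : ℝ) = inner ℝ s (Cinv s'))
    (x y : WithLp 2 (Z × HD)) :
    (inner ℝ (rmA grad embS dvg Cinv t x) y : ℝ) = inner ℝ x (rmA grad embS dvg Cinv t y) := by
  rw [real_inner_comm ((rmA grad embS dvg Cinv t) y) x, rmA_inner, rmA_inner]
  rw [hCsym, real_inner_comm (embS x.snd), real_inner_comm (dvg x.snd) (dvg y.snd),
    real_inner_comm (grad x.fst) (dvg y.snd), real_inner_comm (dvg x.snd) (grad y.fst)]
  ring
end op2

section exun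
variable {Z HD L2sc L2v L2s : Type*}
  [NormedAddCommGroup Z] [InnerProductSpace ℝ Z] [CompleteSpace Z]
  [NormedAddCommGroup HD] [InnerProductSpace ℝ HD] [CompleteSpace HD]
  [NormedAddCommGroup L2sc] [InnerProductSpace ℝ L2sc] [CompleteSpace L2sc]
  [NormedAddCommGroup L2v] [InnerProductSpace ℝ L2v] [CompleteSpace L2v]
  [NormedAddCommGroup L2s] [InnerProductSpace ℝ L2s] [CompleteSpace L2s]

lemma rm_exun
    (embE : Z →L[ℝ] L2sc) (grad : Z →L[ℝ] L2v)
    (embS : HD →L[ℝ] L2s) (dvg : HD →L[ℝ] L2v)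
    (hZnorm : ∀ z : Z, ‖z‖ = ‖grad z‖)
    (hHDnorm : ∀ Θ : HD, ‖Θ‖ ^ 2 = ‖embS Θ‖ ^ 2 + ‖dvg Θ‖ ^ 2)
    (Cinv : L2s →L[ℝ] L2s)
    (hCsym : ∀ s s' : L2s, (inner ℝ (Cinv s) s' : ℝ) = inner ℝ s (Cinv s'))
    (t : ℝ) (ht0 : 0 < t) (ht1 : t ≤ 1) (g : L2sc) (H : L2s) (ξ : L2v) (K0 : ℝ) (hK0 : 0 ≤ K0)
    (hcore : ∀ (x : WithLp 2 (Z × HD)) (P Q R : ℝ), 0 ≤ P → 0 ≤ Q → 0 ≤ R →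
      (∀ (δz : Z) (δΘ : HD),
        (inner ℝ (Cinv (embS x.snd)) (embS δΘ) : ℝ)
          + t ^ 2 * (inner ℝ (dvg x.snd) (dvg δΘ) : ℝ)
          - (inner ℝ (grad x.fst) (dvg δΘ) : ℝ) - (inner ℝ (dvg x.snd) (grad δz) : ℝ)
        = (inner ℝ (rmA grad embS dvg Cinv t x) ((WithLp.equiv 2 (Z × HD)).symm (δz, δΘ)) : ℝ)) →
      (∀ (δz : Z) (δΘ : HD),
        |(inner ℝ (rmA grad embS dvg Cinv t x) ((WithLp.equiv 2 (Z × HD)).symm (δz, δΘ)) : ℝ)|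
          ≤ P * ‖grad δz‖ + Q * ‖embS δΘ‖ + R * (t * ‖dvg δΘ‖)) →
      ‖embS x.snd‖ ^ 2 + t ^ 2 * ‖dvg x.snd‖ ^ 2 + ‖embE x.fst‖ ^ 2 + t * ‖grad x.fst‖ ^ 2
        ≤ K0 * (P ^ 2 + Q ^ 2 + R ^ 2)) :
    ∃! p : Z × HD, ∀ (δz : Z) (δΘ : HD),
      (inner ℝ (Cinv (embS p.2)) (embS δΘ) : ℝ)
        + t ^ 2 * (inner ℝ (dvg p.2) (dvg δΘ) : ℝ)
        - (inner ℝ (grad p.1) (dvg δΘ) : ℝ) - (inner ℝ (dvg p.2) (grad δz) : ℝ)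
      = (inner ℝ g (embE δz) : ℝ) + (inner ℝ H (embS δΘ) : ℝ)
        + Real.sqrt t * (inner ℝ ξ (grad δz) : ℝ) := by
  set A := rmA grad embS dvg Cinv t with hAdef
  have htne : t ≠ 0 := ne_of_gt ht0
  -- splitting of the HD norm
  have hsplit : ∀ Θ' : HD, ‖Θ'‖ ≤ ‖embS Θ'‖ + ‖dvg Θ'‖ := by
    intro Θ'
    have h := hHDnorm Θ'
    have h1 : ‖Θ'‖ = Real.sqrt (‖embS Θ'‖ ^ 2 + ‖dvg Θ'‖ ^ 2) := by
      rw [← h]; exact (Real.sqrt_sq (norm_nonneg _)).symm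
    rw [h1]
    have h2 : ‖embS Θ'‖ ^ 2 + ‖dvg Θ'‖ ^ 2 ≤ (‖embS Θ'‖ + ‖dvg Θ'‖) ^ 2 := by
      have := mul_nonneg (norm_nonneg (embS Θ')) (norm_nonneg (dvg Θ'))
      linarith only [this]
    calc Real.sqrt (‖embS Θ'‖ ^ 2 + ‖dvg Θ'‖ ^ 2) ≤ Real.sqrt ((‖embS Θ'‖ + ‖dvg Θ'‖) ^ 2) :=
          Real.sqrt_le_sqrt h2
      _ = ‖embS Θ'‖ + ‖dvg Θ'‖ := Real.sqrt_sq (by positivity)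
  -- the lower bound for A
  have hlow : ∀ x : WithLp 2 (Z × HD), ‖x‖ ^ 2 ≤ (2 * K0 / t ^ 4) * ‖A x‖ ^ 2 := by
    intro x
    set y := A x with hydef
    have heq' : ∀ (δz : Z) (δΘ : HD),
        (inner ℝ (Cinv (embS x.snd)) (embS δΘ) : ℝ)
          + t ^ 2 * (inner ℝ (dvg x.snd) (dvg δΘ) : ℝ)
          - (inner ℝ (grad x.fst) (dvg δΘ) : ℝ) - (inner ℝ (dvg x.snd) (grad δz) : ℝ)
        = (inner ℝ y ((WithLp.equiv 2 (Z × HD)).symm (δz, δΘ)) : ℝ) := by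
      intro δz δΘ
      exact (rmA_inner grad embS dvg Cinv t x ((WithLp.equiv 2 (Z × HD)).symm (δz, δΘ))).symm
    have hbound : ∀ (δz : Z) (δΘ : HD),
        |(inner ℝ y ((WithLp.equiv 2 (Z × HD)).symm (δz, δΘ)) : ℝ)|
          ≤ ‖y.fst‖ * ‖grad δz‖ + ‖y.snd‖ * ‖embS δΘ‖ + (‖y.snd‖ / t) * (t * ‖dvg δΘ‖) := by
      intro δz δΘ
      have hexp : (inner ℝ y ((WithLp.equiv 2 (Z × HD)).symm (δz, δΘ)) : ℝ)
          = (inner ℝ y.fst δz : ℝ) + (inner ℝ y.snd δΘ : ℝ) := rfl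
      rw [hexp]
      have h1 : |(inner ℝ y.fst δz : ℝ)| ≤ ‖y.fst‖ * ‖grad δz‖ := by
        have := abs_real_inner_le_norm y.fst δz
        rwa [hZnorm δz] at this
      have h2 : |(inner ℝ y.snd δΘ : ℝ)| ≤ ‖y.snd‖ * (‖embS δΘ‖ + ‖dvg δΘ‖) :=
        le_trans (abs_real_inner_le_norm _ _)
          (mul_le_mul_of_nonneg_left (hsplit δΘ) (norm_nonneg _))
      have h3 : (‖y.snd‖ / t) * (t * ‖dvg δΘ‖) = ‖y.snd‖ * ‖dvg δΘ‖ := by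
        field_simp
      rw [h3]
      calc |(inner ℝ y.fst δz : ℝ) + (inner ℝ y.snd δΘ : ℝ)|
          ≤ |(inner ℝ y.fst δz : ℝ)| + |(inner ℝ y.snd δΘ : ℝ)| := abs_add_le _ _
        _ ≤ ‖y.fst‖ * ‖grad δz‖ + (‖y.snd‖ * ‖embS δΘ‖ + ‖y.snd‖ * ‖dvg δΘ‖) := by
            have := mul_nonneg (norm_nonneg y.snd) (norm_nonneg (embS δΘ))
            linarith only [h1, h2, this]
        _ = _ := by ring
    have hc := hcore x ‖y.fst‖ ‖y.snd‖ (‖y.snd‖ / t) (norm_nonneg _) (norm_nonneg _)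
      (by positivity) heq' hbound
    -- now convert
    have hx2 : ‖x‖ ^ 2 = ‖grad x.fst‖ ^ 2 + (‖embS x.snd‖ ^ 2 + ‖dvg x.snd‖ ^ 2) := by
      rw [WithLp.prod_norm_sq_eq_of_L2, hZnorm x.fst, hHDnorm x.snd]
    have hy2 : ‖y‖ ^ 2 = ‖y.fst‖ ^ 2 + ‖y.snd‖ ^ 2 := WithLp.prod_norm_sq_eq_of_L2 _
    have htt : t ^ 2 ≤ t := by
      rw [sq]
      calc t * t ≤ t * 1 := mul_le_mul_of_nonneg_left ht1 ht0.le
        _ = t := mul_one t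
    have ht21 : t ^ 2 ≤ 1 := le_trans htt ht1
    rw [div_mul_eq_mul_div, le_div_iff₀ (by positivity : (0:ℝ) < t ^ 4)]
    have s1 : t ^ 2 * ‖x‖ ^ 2 ≤ ‖embS x.snd‖ ^ 2 + t ^ 2 * ‖dvg x.snd‖ ^ 2
        + ‖embE x.fst‖ ^ 2 + t * ‖grad x.fst‖ ^ 2 := by
      have q1 : 0 ≤ (t - t ^ 2) * ‖grad x.fst‖ ^ 2 :=
        mul_nonneg (by linarith only [htt]) (sq_nonneg _)
      have q2 : 0 ≤ (1 - t ^ 2) * ‖embS x.snd‖ ^ 2 :=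
        mul_nonneg (by linarith only [ht21]) (sq_nonneg _)
      have q3 := sq_nonneg ‖embE x.fst‖
      have hx2t : t ^ 2 * ‖x‖ ^ 2 = t ^ 2 * ‖grad x.fst‖ ^ 2 + t ^ 2 * ‖embS x.snd‖ ^ 2
          + t ^ 2 * ‖dvg x.snd‖ ^ 2 := by rw [hx2]; ring
      linarith only [q1, q2, q3, hx2t]
    have s2 : t ^ 2 * (‖y.fst‖ ^ 2 + ‖y.snd‖ ^ 2 + (‖y.snd‖ / t) ^ 2) ≤ 2 * ‖y‖ ^ 2 := by
      have q4 : t ^ 2 * (‖y.snd‖ / t) ^ 2 = ‖y.snd‖ ^ 2 := by field_simp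
      have q5 : 0 ≤ (2 - t ^ 2) * ‖y.fst‖ ^ 2 :=
        mul_nonneg (by linarith only [ht21]) (sq_nonneg _)
      have q6 : 0 ≤ (1 - t ^ 2) * ‖y.snd‖ ^ 2 :=
        mul_nonneg (by linarith only [ht21]) (sq_nonneg _)
      have hy2' : 2 * ‖y‖ ^ 2 = 2 * ‖y.fst‖ ^ 2 + 2 * ‖y.snd‖ ^ 2 := by rw [hy2]; ring
      linarith only [q4, q5, q6, hy2']
    have s3 := mul_le_mul_of_nonneg_left hc (sq_nonneg t)
    have s5 := mul_le_mul_of_nonneg_left s2 hK0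
    have s6 := mul_le_mul_of_nonneg_left s1 (sq_nonneg t)
    linarith only [s3, s5, s6]
  -- norm lower bound
  have hC : (0:ℝ) ≤ 2 * K0 / t ^ 4 := div_nonneg (by linarith only [hK0]) (by positivity)
  have hANorm : ∀ x : WithLp 2 (Z × HD), ‖x‖ ≤ Real.sqrt (2 * K0 / t ^ 4) * ‖A x‖ := by
    intro x
    calc ‖x‖ = Real.sqrt (‖x‖ ^ 2) := (Real.sqrt_sq (norm_nonneg _)).symm
      _ ≤ Real.sqrt ((2 * K0 / t ^ 4) * ‖A x‖ ^ 2) := Real.sqrt_le_sqrt (hlow x)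
      _ = Real.sqrt (2 * K0 / t ^ 4) * ‖A x‖ := by
          rw [Real.sqrt_mul hC, Real.sqrt_sq (norm_nonneg _)]
  have hinj : ∀ x : WithLp 2 (Z × HD), A x = 0 → x = 0 := by
    intro x hx
    have h := hANorm x
    rw [hx, norm_zero, mul_zero] at h
    exact norm_le_zero_iff.mp h
  -- surjectivity
  have hanti : AntilipschitzWith (Real.toNNReal (Real.sqrt (2 * K0 / t ^ 4))) A :=
    A.antilipschitz_of_bound (fun x => by
      rw [Real.coe_toNNReal _ (Real.sqrt_nonneg _)]; exact hANorm x)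
  have hclosed : IsClosed (Set.range A) := hanti.isClosed_range A.uniformContinuous
  have hrange_closed :
      IsClosed ((LinearMap.range (A : WithLp 2 (Z × HD) →ₗ[ℝ] WithLp 2 (Z × HD)) : Submodule ℝ (WithLp 2 (Z × HD))) : Set (WithLp 2 (Z × HD))) := by
    have h : ((LinearMap.range (A : WithLp 2 (Z × HD) →ₗ[ℝ] WithLp 2 (Z × HD)) : Submodule ℝ (WithLp 2 (Z × HD))) : Set (WithLp 2 (Z × HD)))
        = Set.range A := LinearMap.coe_range _
    rw [h]; exact hclosed
  haveI : CompleteSpace (LinearMap.range (A : WithLp 2 (Z × HD) →ₗ[ℝ] WithLp 2 (Z × HD))) := hrange_closed.completeSpace_coe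
  have hbot : (LinearMap.range (A : WithLp 2 (Z × HD) →ₗ[ℝ] WithLp 2 (Z × HD)))ᗮ = ⊥ := by
    rw [Submodule.eq_bot_iff]
    intro v hv
    have h1 : (inner ℝ (A (A v)) v : ℝ) = 0 :=
      (Submodule.mem_orthogonal _ v).mp hv (A (A v)) (LinearMap.mem_range_self _ _)
    have h2 : (inner ℝ (A v) (A v) : ℝ) = 0 :=
      (rmA_symm grad embS dvg Cinv t hCsym (A v) v).symm.trans h1
    exact hinj v (inner_self_eq_zero.mp h2)
  have htop : LinearMap.range (A : WithLp 2 (Z × HD) →ₗ[ℝ] WithLp 2 (Z × HD)) = ⊤ := Submodule.orthogonal_eq_bot_iff.mp hbot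
  -- representer of the right-hand side
  set φ1 : Z →L[ℝ] ℝ := ((innerSL ℝ g).comp embE) + Real.sqrt t • ((innerSL ℝ ξ).comp grad)
    with hφ1
  set y1 : Z := (InnerProductSpace.toDual ℝ Z).symm φ1 with hy1def
  have hy1 : ∀ δz : Z, (inner ℝ y1 δz : ℝ)
      = (inner ℝ g (embE δz) : ℝ) + Real.sqrt t * (inner ℝ ξ (grad δz) : ℝ) := by
    intro δz
    rw [hy1def, InnerProductSpace.toDual_symm_apply]
    simp [hφ1]
  set φ2 : HD →L[ℝ] ℝ := (innerSL ℝ H).comp embS with hφ2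
  set y2 : HD := (InnerProductSpace.toDual ℝ HD).symm φ2 with hy2def
  have hy2v : ∀ δΘ : HD, (inner ℝ y2 δΘ : ℝ) = (inner ℝ H (embS δΘ) : ℝ) := by
    intro δΘ
    rw [hy2def, InnerProductSpace.toDual_symm_apply]
    simp [hφ2]
  set w0 : WithLp 2 (Z × HD) := (WithLp.equiv 2 (Z × HD)).symm (y1, y2) with hw0
  have hw0inner : ∀ v : WithLp 2 (Z × HD),
      (inner ℝ w0 v : ℝ) = (inner ℝ y1 v.fst : ℝ) + (inner ℝ y2 v.snd : ℝ) := fun v => rfl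
  obtain ⟨x0, hx0⟩ : ∃ x0, A x0 = w0 := by
    have h : w0 ∈ LinearMap.range (A : WithLp 2 (Z × HD) →ₗ[ℝ] WithLp 2 (Z × HD)) := htop ▸ Submodule.mem_top
    exact h
  refine ⟨(x0.fst, x0.snd), ?_, ?_⟩
  · intro δz δΘ
    have h1 := rmA_inner grad embS dvg Cinv t x0 ((WithLp.equiv 2 (Z × HD)).symm (δz, δΘ))
    have h2 : (inner ℝ (A x0) ((WithLp.equiv 2 (Z × HD)).symm (δz, δΘ)) : ℝ)
        = (inner ℝ y1 δz : ℝ) + (inner ℝ y2 δΘ : ℝ) := by rw [hx0]; rfl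
    exact (h1.symm.trans h2).trans (by rw [hy1 δz, hy2v δΘ]; ring)
  · rintro ⟨z', Θ'⟩ hp'
    set x' : WithLp 2 (Z × HD) := (WithLp.equiv 2 (Z × HD)).symm (z', Θ') with hx'
    have hax' : A x' = w0 := by
      have hall : ∀ v : WithLp 2 (Z × HD), (inner ℝ (A x') v : ℝ) = (inner ℝ w0 v : ℝ) := by
        intro v
        have h1 := rmA_inner grad embS dvg Cinv t x' v
        rw [h1, hw0inner v, hy1 v.fst, hy2v v.snd]
        exact (hp' v.fst v.snd).trans (by ring)
      have h0 : (inner ℝ (A x' - w0) (A x' - w0) : ℝ) = 0 := by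
        rw [inner_sub_left, hall, sub_self]
      exact sub_eq_zero.mp (inner_self_eq_zero.mp h0)
    have hxx : x' = x0 := by
      have h := hinj (x' - x0) (by rw [map_sub, hax', hx0, sub_self])
      exact sub_eq_zero.mp h
    rw [← hxx]
    rfl
end exun

/-- Uniform well-posedness of the mixed weak form (adj_weak) of the adjoint
Reissner–Mindlin problem (core of Lemma 5.1), in an abstract Hilbert-space setting:
`Z` models `H¹₀(Ω)` (with embedding `embE` into the scalar `L²` space and gradient
`grad`), `HD` models the symmetric `H(div)` space (with embedding `embS` into the
symmetric-tensor `L²` space and row-wise divergence `dvg`), and `Cinv` models the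
positive definite material tensor `C⁻¹`.  Under the `t`-uniform inf-sup condition
for `(div Θ, ∇δz)` with the weighted norm `(‖Θ‖² + t²‖div Θ‖²)^{1/2}`, the mixed
problem is uniquely solvable for every right-hand side `(g,H,ξ)` with the
`t`-uniform stability bound. -/
theorem adjoint_mixed_problem_uniformly_well_posed
    {Z HD L2sc L2v L2s : Type*}
    [NormedAddCommGroup Z] [InnerProductSpace ℝ Z] [CompleteSpace Z]
    [NormedAddCommGroup HD] [InnerProductSpace ℝ HD] [CompleteSpace HD]
    [NormedAddCommGroup L2sc] [InnerProductSpace ℝ L2sc] [CompleteSpace L2sc]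
    [NormedAddCommGroup L2v] [InnerProductSpace ℝ L2v] [CompleteSpace L2v]
    [NormedAddCommGroup L2s] [InnerProductSpace ℝ L2s] [CompleteSpace L2s]
    (embE : Z →L[ℝ] L2sc) (grad : Z →L[ℝ] L2v)
    (embS : HD →L[ℝ] L2s) (dvg : HD →L[ℝ] L2v)
    -- `Z` carries the `H¹₀` norm and `HD` the `H(div)` norm:
    (hZnorm : ∀ z : Z, ‖z‖ = ‖grad z‖)
    (hHDnorm : ∀ Θ : HD, ‖Θ‖ ^ 2 = ‖embS Θ‖ ^ 2 + ‖dvg Θ‖ ^ 2)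
    -- Poincaré inequality on `H¹₀(Ω)`:
    (Cp : ℝ) (hCp : 0 < Cp) (hPoincare : ∀ z : Z, ‖embE z‖ ≤ Cp * ‖grad z‖)
    -- `C⁻¹` is symmetric and positive definite, with bounds independent of `t`:
    (Cinv : L2s →L[ℝ] L2s) (c₁ : ℝ) (hc₁ : 0 < c₁)
    (hCsym : ∀ s s' : L2s, (inner ℝ (Cinv s) s' : ℝ) = inner ℝ s (Cinv s'))
    (hCpos : ∀ s : L2s, c₁ * ‖s‖ ^ 2 ≤ (inner ℝ (Cinv s) s : ℝ))
    -- the `t`-uniform inf-sup condition for `(div Θ, ∇δz)`: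
    (β : ℝ) (hβ : 0 < β)
    (hinfsup : ∀ t ∈ Ioc (0:ℝ) 1, ∀ δz : Z,
      β * ‖grad δz‖ ≤ sSup {r : ℝ | ∃ Θ : HD, Θ ≠ 0 ∧
        r = (inner ℝ (dvg Θ) (grad δz) : ℝ) /
              Real.sqrt (‖embS Θ‖ ^ 2 + t ^ 2 * ‖dvg Θ‖ ^ 2)}) :
    ∃ K > 0, ∀ t ∈ Ioc (0:ℝ) 1, ∀ (g : L2sc) (H : L2s) (ξ : L2v),
      (∃! p : Z × HD, ∀ (δz : Z) (δΘ : HD),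
        (inner ℝ (Cinv (embS p.2)) (embS δΘ) : ℝ)
          + t ^ 2 * (inner ℝ (dvg p.2) (dvg δΘ) : ℝ)
          - (inner ℝ (grad p.1) (dvg δΘ) : ℝ) - (inner ℝ (dvg p.2) (grad δz) : ℝ)
        = (inner ℝ g (embE δz) : ℝ) + (inner ℝ H (embS δΘ) : ℝ)
          + Real.sqrt t * (inner ℝ ξ (grad δz) : ℝ)) ∧
      (∀ (z : Z) (Θ : HD),
        (∀ (δz : Z) (δΘ : HD),
          (inner ℝ (Cinv (embS Θ)) (embS δΘ) : ℝ)
            + t ^ 2 * (inner ℝ (dvg Θ) (dvg δΘ) : ℝ)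
            - (inner ℝ (grad z) (dvg δΘ) : ℝ) - (inner ℝ (dvg Θ) (grad δz) : ℝ)
          = (inner ℝ g (embE δz) : ℝ) + (inner ℝ H (embS δΘ) : ℝ)
            + Real.sqrt t * (inner ℝ ξ (grad δz) : ℝ)) →
        ‖embS Θ‖ ^ 2 + t ^ 2 * ‖dvg Θ‖ ^ 2 + ‖embE z‖ ^ 2 + t * ‖grad z‖ ^ 2
          ≤ K * (‖g‖ ^ 2 + ‖H‖ ^ 2 + ‖ξ‖ ^ 2)) := by
  have hM0 : (0:ℝ) ≤ ‖Cinv‖ := norm_nonneg _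
  have hK0 : 0 ≤ rmK0 c₁ β Cp ‖Cinv‖ := rmK0_nonneg hc₁ hβ hM0
  refine ⟨(rmK0 c₁ β Cp ‖Cinv‖ + 1) * (2 * Cp ^ 2 + 2),
    mul_pos (by linarith only [hK0]) (by positivity), ?_⟩
  intro t ht g H ξ
  obtain ⟨ht0, ht1⟩ := ht
  constructor
  · refine rm_exun embE grad embS dvg hZnorm hHDnorm Cinv hCsym t ht0 ht1 g H ξ
      (rmK0 c₁ β Cp ‖Cinv‖) hK0 ?_
    intro x P Q R hP hQ hR heq hbound
    exact rm_core_est embE grad embS dvg hHDnorm Cp hPoincare Cinv c₁ hc₁ hCpos β hβ hinfsup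
      t ht0 ht1 x.fst x.snd
      (fun δz δΘ =>
        (inner ℝ (rmA grad embS dvg Cinv t x) ((WithLp.equiv 2 (Z × HD)).symm (δz, δΘ)) : ℝ))
      P Q R hP hQ hR heq hbound
  · intro z Θ hsol
    have hst0 : 0 ≤ Real.sqrt t := Real.sqrt_nonneg t
    have hst1 : Real.sqrt t ≤ 1 := Real.sqrt_le_one.mpr ht1
    have hcore := rm_core_est embE grad embS dvg hHDnorm Cp hPoincare Cinv c₁ hc₁ hCpos β hβ
      hinfsup t ht0 ht1 z Θ
      (fun δz δΘ => (inner ℝ g (embE δz) : ℝ) + (inner ℝ H (embS δΘ) : ℝ)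
        + Real.sqrt t * (inner ℝ ξ (grad δz) : ℝ))
      (Cp * ‖g‖ + ‖ξ‖) ‖H‖ 0 (by positivity) (norm_nonneg _) le_rfl hsol ?_
    · have hP2 : (Cp * ‖g‖ + ‖ξ‖) ^ 2 + ‖H‖ ^ 2 + 0 ^ 2
          ≤ (2 * Cp ^ 2 + 2) * (‖g‖ ^ 2 + ‖H‖ ^ 2 + ‖ξ‖ ^ 2) := by
        linarith only [sq_nonneg (Cp * ‖g‖ - ‖ξ‖),
          mul_nonneg (sq_nonneg Cp) (sq_nonneg ‖g‖),
          mul_nonneg (sq_nonneg Cp) (sq_nonneg ‖ξ‖),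
          mul_nonneg (sq_nonneg Cp) (sq_nonneg ‖H‖),
          sq_nonneg ‖g‖, sq_nonneg ‖H‖, sq_nonneg ‖ξ‖]
      have hKmul := mul_le_mul_of_nonneg_left hP2 hK0
      have hpos : 0 ≤ (2 * Cp ^ 2 + 2) * (‖g‖ ^ 2 + ‖H‖ ^ 2 + ‖ξ‖ ^ 2) := by positivity
      linarith only [hcore, hKmul, hpos]
    · intro δz δΘ
      have h1 : |(inner ℝ g (embE δz) : ℝ)| ≤ ‖g‖ * (Cp * ‖grad δz‖) :=
        le_trans (abs_real_inner_le_norm _ _)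
          (mul_le_mul_of_nonneg_left (hPoincare δz) (norm_nonneg g))
      have h2 : |(inner ℝ H (embS δΘ) : ℝ)| ≤ ‖H‖ * ‖embS δΘ‖ := abs_real_inner_le_norm _ _
      have h3 : |Real.sqrt t * (inner ℝ ξ (grad δz) : ℝ)| ≤ ‖ξ‖ * ‖grad δz‖ := by
        rw [abs_mul, abs_of_nonneg hst0]
        calc Real.sqrt t * |(inner ℝ ξ (grad δz) : ℝ)|
            ≤ 1 * (‖ξ‖ * ‖grad δz‖) :=
              mul_le_mul hst1 (abs_real_inner_le_norm _ _) (abs_nonneg _) zero_le_one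
          _ = ‖ξ‖ * ‖grad δz‖ := one_mul _
      refine le_trans (abs_add_le _ _) (le_trans (add_le_add_left (abs_add_le _ _) _) ?_)
      linarith only [h1, h2, h3]
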